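/- Let X be the dual of a Banach space Y, j : X → (-∞,∞] proper and convex, x ∈ dom(j), g ∈ ∂j(x). If j is weakly-* twice epi-differentiable at x for g (i.e., for every direction z and every sequence tₙ ↘ 0 there exists a recovery sequence zₙ →* z with (j(x + tₙ zₙ) − j(x) − tₙ⟨g, zₙ⟩)/(tₙ²/2) → Q(z)), then the second subderivative Q is a convex function on X. -/

import Mathlib

open Filter Topology

variable {Y : Type*} [NormedAddCommGroup Y] [NormedSpace ℝ Y] [CompleteSpace Y]

/-- Second-order difference quotient of `j` at `x` for `g` with step `t` and direction `w`. -/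
noncomputable def secondQuot (j : StrongDual ℝ Y → EReal) (x : StrongDual ℝ Y)
    (g : Y) (t : ℝ) (w : StrongDual ℝ Y) : EReal :=
  ((2 / t ^ 2 : ℝ) : EReal) * (j (x + t • w) - j x - ((t * w g : ℝ) : EReal))

/-- Weak-* convergence of a sequence in the dual of `Y`. -/
def WeakStarTendsto (z : ℕ → StrongDual ℝ Y) (z₀ : StrongDual ℝ Y) : Prop :=
  ∀ y : Y, Tendsto (fun n => z n y) atTop (nhds (z₀ y))

/-- The weak-* second subderivative of `j` at `x` for `g`. -/
noncomputable def Qsub (j : StrongDual ℝ Y → EReal) (x : StrongDual ℝ Y) (g : Y)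
    (z : StrongDual ℝ Y) : EReal :=
  sInf { L | ∃ (t : ℕ → ℝ) (zs : ℕ → StrongDual ℝ Y),
      (∀ n, 0 < t n) ∧ Tendsto t atTop (nhds 0) ∧ WeakStarTendsto zs z ∧
      L = Filter.liminf (fun n => secondQuot j x g (t n) (zs n)) atTop }

lemma secondQuot_nonneg (j : StrongDual ℝ Y → EReal)
    (hbot : ∀ u, j u ≠ ⊥) (x : StrongDual ℝ Y) (hx : j x ≠ ⊤) (g : Y)
    (hg : ∀ z : StrongDual ℝ Y, j x + (((z - x) g : ℝ) : EReal) ≤ j z)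
    (t : ℝ) (w : StrongDual ℝ Y) :
    0 ≤ secondQuot j x g t w := by
  have h := hg (x + t • w)
  have harg : ((x + t • w - x) g : ℝ) = t * w g := by simp
  rw [harg] at h
  unfold secondQuot
  apply mul_nonneg
  · exact_mod_cast (by positivity : (0:ℝ) ≤ 2 / t ^ 2)
  · rw [EReal.le_sub_iff_add_le (Or.inl (EReal.coe_ne_bot _)) (Or.inl (EReal.coe_ne_top _)), zero_add,
      EReal.le_sub_iff_add_le (Or.inl (hbot x)) (Or.inl hx)]
    rwa [add_comm]

lemma Qsub_nonneg (j : StrongDual ℝ Y → EReal)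
    (hbot : ∀ u, j u ≠ ⊥) (x : StrongDual ℝ Y) (hx : j x ≠ ⊤) (g : Y)
    (hg : ∀ z : StrongDual ℝ Y, j x + (((z - x) g : ℝ) : EReal) ≤ j z)
    (z : StrongDual ℝ Y) : 0 ≤ Qsub j x g z := by
  refine le_sInf ?_
  rintro L ⟨t, zs, htpos, -, -, rfl⟩
  exact le_liminf_of_le (by isBoundedDefault)
    (Eventually.of_forall fun n => secondQuot_nonneg j hbot x hx g hg (t n) (zs n))

lemma secondQuot_convex (j : StrongDual ℝ Y → EReal)
    (hbot : ∀ u, j u ≠ ⊥)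
    (hconv : ∀ (a b : StrongDual ℝ Y) (l : ℝ), 0 ≤ l → l ≤ 1 →
      j (l • a + (1 - l) • b) ≤ ((l : ℝ) : EReal) * j a + (((1 - l : ℝ)) : EReal) * j b)
    (x : StrongDual ℝ Y) (hx : j x ≠ ⊤) (g : Y)
    (hg : ∀ z : StrongDual ℝ Y, j x + (((z - x) g : ℝ) : EReal) ≤ j z)
    (t : ℝ) (ht : 0 < t) (u v : StrongDual ℝ Y) (l : ℝ) (hl0 : 0 < l) (hl1 : l < 1) :
    secondQuot j x g t (l • u + (1 - l) • v) ≤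
      ((l : ℝ) : EReal) * secondQuot j x g t u
        + (((1 - l : ℝ)) : EReal) * secondQuot j x g t v := by
  have hl1' : 0 < 1 - l := by linarith
  have key : x + t • (l • u + (1 - l) • v) = l • (x + t • u) + (1 - l) • (x + t • v) := by
    module
  have hc : (0:ℝ) < 2 / t ^ 2 := by positivity
  have rx : ((j x).toReal : EReal) = j x := EReal.coe_toReal hx (hbot x)
  -- nonnegativity of the two pieces on the RHS
  have hnonnegU : (0:EReal) ≤ ((l : ℝ) : EReal) * secondQuot j x g t u :=
    mul_nonneg (by exact_mod_cast hl0.le) (secondQuot_nonneg j hbot x hx g hg t u)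
  have hnonnegV : (0:EReal) ≤ (((1 - l : ℝ)) : EReal) * secondQuot j x g t v :=
    mul_nonneg (by exact_mod_cast hl1'.le) (secondQuot_nonneg j hbot x hx g hg t v)
  by_cases hA : j (x + t • u) = ⊤
  · have : secondQuot j x g t u = ⊤ := by
      unfold secondQuot
      rw [hA, ← rx, EReal.top_sub_coe, EReal.top_sub_coe]
      exact EReal.coe_mul_top_of_pos hc
    rw [this, EReal.coe_mul_top_of_pos hl0,
      EReal.top_add_of_ne_bot (ne_of_gt (lt_of_lt_of_le EReal.bot_lt_zero hnonnegV))]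
    exact le_top
  by_cases hB : j (x + t • v) = ⊤
  · have : secondQuot j x g t v = ⊤ := by
      unfold secondQuot
      rw [hB, ← rx, EReal.top_sub_coe, EReal.top_sub_coe]
      exact EReal.coe_mul_top_of_pos hc
    rw [this, EReal.coe_mul_top_of_pos hl1',
      EReal.add_top_of_ne_bot (ne_of_gt (lt_of_lt_of_le EReal.bot_lt_zero hnonnegU))]
    exact le_top
  -- all values are finite
  have rA : ((j (x + t • u)).toReal : EReal) = j (x + t • u) :=
    EReal.coe_toReal hA (hbot _)
  have rB : ((j (x + t • v)).toReal : EReal) = j (x + t • v) :=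
    EReal.coe_toReal hB (hbot _)
  have hW := hconv (x + t • u) (x + t • v) l hl0.le hl1.le
  rw [← key] at hW
  have hWne : j (x + t • (l • u + (1 - l) • v)) ≠ ⊤ := by
    intro hcon
    rw [hcon, ← rA, ← rB, ← EReal.coe_mul, ← EReal.coe_mul, ← EReal.coe_add] at hW
    exact (EReal.coe_ne_top _) (top_le_iff.mp hW)
  have rW : ((j (x + t • (l • u + (1 - l) • v))).toReal : EReal)
      = j (x + t • (l • u + (1 - l) • v)) := EReal.coe_toReal hWne (hbot _)
  set a := (j (x + t • u)).toReal
  set b := (j (x + t • v)).toReal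
  set c := (j (x + t • (l • u + (1 - l) • v))).toReal
  set d := (j x).toReal
  have hWr : c ≤ l * a + (1 - l) * b := by
    rw [← rA, ← rB, ← rW, ← EReal.coe_mul, ← EReal.coe_mul, ← EReal.coe_add] at hW
    exact_mod_cast hW
  have happ : ((l • u + (1 - l) • v) : StrongDual ℝ Y) g = l * u g + (1 - l) * v g := by
    simp
  unfold secondQuot
  rw [← rA, ← rB, ← rW, ← rx, happ]
  rw [← EReal.coe_sub, ← EReal.coe_sub, ← EReal.coe_sub, ← EReal.coe_sub, ← EReal.coe_sub,
    ← EReal.coe_sub, ← EReal.coe_mul, ← EReal.coe_mul, ← EReal.coe_mul, ← EReal.coe_mul,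
    ← EReal.coe_mul, ← EReal.coe_add, EReal.coe_le_coe_iff]
  nlinarith [mul_le_mul_of_nonneg_left hWr hc.le]

/-- if `j` is proper, convex and weakly-* twice epi-differentiable at `x`
for `g ∈ ∂j(x)`, then the weak-* second subderivative is convex. -/
theorem Qsub_convex_of_weakStar_twice_epiDiff (j : StrongDual ℝ Y → EReal)
    (hbot : ∀ u, j u ≠ ⊥) (hproper : ∃ u, j u ≠ ⊤)
    (hconv : ∀ (a b : StrongDual ℝ Y) (l : ℝ), 0 ≤ l → l ≤ 1 →
      j (l • a + (1 - l) • b) ≤ ((l : ℝ) : EReal) * j a + (((1 - l : ℝ)) : EReal) * j b)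
    (x : StrongDual ℝ Y) (hx : j x ≠ ⊤) (g : Y)
    (hg : ∀ z : StrongDual ℝ Y, j x + (((z - x) g : ℝ) : EReal) ≤ j z)
    (hepi : ∀ z : StrongDual ℝ Y, ∀ t : ℕ → ℝ, (∀ n, 0 < t n) →
      Tendsto t atTop (nhds 0) →
      ∃ zs : ℕ → StrongDual ℝ Y, WeakStarTendsto zs z ∧
        Tendsto (fun n => secondQuot j x g (t n) (zs n)) atTop (nhds (Qsub j x g z))) :
    ∀ (z zh : StrongDual ℝ Y) (l : ℝ), 0 ≤ l → l ≤ 1 →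
      Qsub j x g (l • z + (1 - l) • zh) ≤
        ((l : ℝ) : EReal) * Qsub j x g z + (((1 - l : ℝ)) : EReal) * Qsub j x g zh := by
  intro z zh l hl0 hl1
  rcases eq_or_lt_of_le hl0 with rfl | hl0'
  · simp
  rcases eq_or_lt_of_le hl1 with rfl | hl1'
  · simp
  -- now 0 < l < 1
  set t : ℕ → ℝ := fun n => 1 / (n + 1) with ht_def
  have htpos : ∀ n, 0 < t n := fun n => by positivity
  have htlim : Tendsto t atTop (nhds 0) := tendsto_one_div_add_atTop_nhds_zero_nat
  obtain ⟨zs, hzs, ha⟩ := hepi z t htpos htlim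
  obtain ⟨zhs, hzhs, hb⟩ := hepi zh t htpos htlim
  set a : ℕ → EReal := fun n => secondQuot j x g (t n) (zs n) with ha_def
  set b : ℕ → EReal := fun n => secondQuot j x g (t n) (zhs n) with hb_def
  set w : ℕ → StrongDual ℝ Y := fun n => l • zs n + (1 - l) • zhs n with hw_def
  have hws : WeakStarTendsto w (l • z + (1 - l) • zh) := by
    intro y
    have : (fun n => w n y) = fun n => l * zs n y + (1 - l) * zhs n y := by
      funext n; simp [hw_def]
    rw [this]
    have htarget : (l • z + (1 - l) • zh) y = l * z y + (1 - l) * zh y := by simp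
    rw [htarget]
    exact ((hzs y).const_mul l).add ((hzhs y).const_mul (1 - l))
  have hmem : Qsub j x g (l • z + (1 - l) • zh) ≤
      liminf (fun n => secondQuot j x g (t n) (w n)) atTop :=
    sInf_le ⟨t, w, htpos, htlim, hws, rfl⟩
  have hptwise : liminf (fun n => secondQuot j x g (t n) (w n)) atTop ≤
      liminf (fun n => ((l : ℝ) : EReal) * a n + (((1 - l : ℝ)) : EReal) * b n) atTop := by
    exact liminf_le_liminf (Eventually.of_forall fun n =>
      secondQuot_convex j hbot hconv x hx g hg (t n) (htpos n) (zs n) (zhs n) l hl0' hl1')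
  refine hmem.trans (hptwise.trans ?_)
  -- deal with infinite values of Qsub
  have hQa0 := Qsub_nonneg j hbot x hx g hg z
  have hQb0 := Qsub_nonneg j hbot x hx g hg zh
  by_cases hQa : Qsub j x g z = ⊤
  · rw [hQa, EReal.coe_mul_top_of_pos hl0',
      EReal.top_add_of_ne_bot (ne_of_gt (lt_of_lt_of_le EReal.bot_lt_zero
        (mul_nonneg (by exact_mod_cast (by linarith : (0:ℝ) ≤ 1 - l)) hQb0)))]
    exact le_top
  by_cases hQb : Qsub j x g zh = ⊤
  · rw [hQb, EReal.coe_mul_top_of_pos (by linarith : (0:ℝ) < 1 - l),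
      EReal.add_top_of_ne_bot (ne_of_gt (lt_of_lt_of_le EReal.bot_lt_zero
        (mul_nonneg (by exact_mod_cast hl0'.le) hQa0)))]
    exact le_top
  -- both limits are finite
  have hQa' : ((Qsub j x g z).toReal : EReal) = Qsub j x g z :=
    EReal.coe_toReal hQa (ne_of_gt (lt_of_lt_of_le EReal.bot_lt_zero hQa0))
  have hQb' : ((Qsub j x g zh).toReal : EReal) = Qsub j x g zh :=
    EReal.coe_toReal hQb (ne_of_gt (lt_of_lt_of_le EReal.bot_lt_zero hQb0))
  set rA := (Qsub j x g z).toReal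
  set rB := (Qsub j x g zh).toReal
  have hra : Tendsto (fun n => (a n).toReal) atTop (nhds rA) :=
    (EReal.tendsto_toReal hQa (ne_of_gt (lt_of_lt_of_le EReal.bot_lt_zero hQa0))).comp ha
  have hrb : Tendsto (fun n => (b n).toReal) atTop (nhds rB) :=
    (EReal.tendsto_toReal hQb (ne_of_gt (lt_of_lt_of_le EReal.bot_lt_zero hQb0))).comp hb
  have hreal : Tendsto (fun n => l * (a n).toReal + (1 - l) * (b n).toReal) atTop
      (nhds (l * rA + (1 - l) * rB)) :=
    (hra.const_mul l).add (hrb.const_mul (1 - l))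
  have hcoe : Tendsto (fun n => ((l * (a n).toReal + (1 - l) * (b n).toReal : ℝ) : EReal)) atTop
      (nhds ((l * rA + (1 - l) * rB : ℝ) : EReal)) :=
    (continuous_coe_real_ereal.tendsto _).comp hreal
  -- eventually a n and b n are finite
  have hAfin : ∀ᶠ n in atTop, a n ≠ ⊤ ∧ a n ≠ ⊥ := by
    have h1 : ∀ᶠ n in atTop, a n < ⊤ := ha.eventually_lt_const (lt_top_iff_ne_top.mpr hQa)
    have h2 : ∀ᶠ n in atTop, (⊥ : EReal) < a n := ha.eventually_const_lt
      (lt_of_lt_of_le EReal.bot_lt_zero hQa0)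
    filter_upwards [h1, h2] with n hn1 hn2
    exact ⟨hn1.ne, hn2.ne'⟩
  have hBfin : ∀ᶠ n in atTop, b n ≠ ⊤ ∧ b n ≠ ⊥ := by
    have h1 : ∀ᶠ n in atTop, b n < ⊤ := hb.eventually_lt_const (lt_top_iff_ne_top.mpr hQb)
    have h2 : ∀ᶠ n in atTop, (⊥ : EReal) < b n := hb.eventually_const_lt
      (lt_of_lt_of_le EReal.bot_lt_zero hQb0)
    filter_upwards [h1, h2] with n hn1 hn2
    exact ⟨hn1.ne, hn2.ne'⟩
  have heq : (fun n => ((l : ℝ) : EReal) * a n + (((1 - l : ℝ)) : EReal) * b n) =ᶠ[atTop]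
      fun n => ((l * (a n).toReal + (1 - l) * (b n).toReal : ℝ) : EReal) := by
    filter_upwards [hAfin, hBfin] with n hn1 hn2
    rw [← EReal.coe_toReal hn1.1 hn1.2, ← EReal.coe_toReal hn2.1 hn2.2,
      ← EReal.coe_mul, ← EReal.coe_mul, ← EReal.coe_add]
    simp only [EReal.toReal_coe]
  have hlimit : Tendsto (fun n => ((l : ℝ) : EReal) * a n + (((1 - l : ℝ)) : EReal) * b n) atTop
      (nhds ((l * rA + (1 - l) * rB : ℝ) : EReal)) := hcoe.congr' heq.symm
  rw [hlimit.liminf_eq, ← hQa', ← hQb', ← EReal.coe_mul, ← EReal.coe_mul, ← EReal.coe_add]
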